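/- Let H be a finite-dimensional reproducing kernel Hilbert space of functions on a set X with kernel K, let Λ ⊂ X be finite with K(λ,λ) > 0 for all λ ∈ Λ, and suppose the normalized kernels κ_λ = K(λ,·)/√(K(λ,λ)) form a Riesz sequence with lower bound 1/C, i.e. (1/C)·Σ|c_λ|² ≤ ‖Σ c_λ κ_λ‖². Then for any values (v_λ)_{λ∈Λ} there exists f in the span of {κ_λ} with f(λ)/√(K(λ,λ)) = v_λ for all λ ∈ Λ and ‖f‖² ≤ C·Σ|v_λ|². -/

import Mathlib

open scoped BigOperators

/-- in a finite-dimensional RKHS (with kernel `K x y = ⟨Φ x, Φ y⟩`, evaluation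
`f(x) = ⟨f, Φ x⟩`), if the normalized kernels `κ_λ = Φ λ / √(K λ λ)`, `λ ∈ Λ`, satisfy the
lower Riesz bound `(1/C) Σ c_λ² ≤ ‖Σ c_λ κ_λ‖²`, then every moment problem
`f(λ)/√(K λ λ) = v_λ` is solvable with `f` in the span of the `κ_λ`'s
and `‖f‖² ≤ C Σ v_λ²`. -/
theorem stmt7 {H X : Type*} [NormedAddCommGroup H] [InnerProductSpace ℝ H]
    [FiniteDimensional ℝ H]
    (Φ : X → H) (K : X → X → ℝ) (hK : ∀ x y, K x y = (inner ℝ (Φ x) (Φ y) : ℝ))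
    (Λ : Finset X) (hpos : ∀ l ∈ Λ, 0 < K l l)
    (C : ℝ) (hC : 0 < C)
    (hRiesz : ∀ c : X → ℝ,
      (1 / C) * ∑ l ∈ Λ, (c l)^2
        ≤ ‖∑ l ∈ Λ, c l • ((Real.sqrt (K l l))⁻¹ • Φ l)‖^2) :
    ∀ v : X → ℝ, ∃ f : H,
      f ∈ Submodule.span ℝ ((fun l => (Real.sqrt (K l l))⁻¹ • Φ l) '' (Λ : Set X)) ∧
      (∀ l ∈ Λ, (inner ℝ f (Φ l) : ℝ) / Real.sqrt (K l l) = v l) ∧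
      ‖f‖^2 ≤ C * ∑ l ∈ Λ, (v l)^2 := by
  classical
  intro v
  set κ : X → H := fun l => (Real.sqrt (K l l))⁻¹ • Φ l with hκ
  -- linear map sending coefficients to the corresponding combination
  let Tl : (↥Λ → ℝ) →ₗ[ℝ] H :=
    { toFun := fun c => ∑ μ : ↥Λ, c μ • κ (μ : X)
      map_add' := by
        intro c d
        simp [add_smul, Finset.sum_add_distrib]
      map_smul' := by
        intro r c
        simp [smul_smul, Finset.smul_sum] }
  -- extension of coefficients to all of X
  let ext : (↥Λ → ℝ) → (X → ℝ) := fun c x => if h : x ∈ Λ then c ⟨x, h⟩ else 0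
  have hTl : ∀ c : ↥Λ → ℝ, ∑ l ∈ Λ, (ext c l) • κ l = Tl c := by
    intro c
    rw [show (Tl c : H) = ∑ μ : ↥Λ, c μ • κ (μ : X) from rfl,
      ← Finset.sum_coe_sort Λ (fun l => ext c l • κ l)]
    refine Finset.sum_congr rfl fun μ _ => ?_
    simp [ext, μ.2]
  have hsq : ∀ c : ↥Λ → ℝ, ∑ l ∈ Λ, (ext c l) ^ 2 = ∑ μ : ↥Λ, (c μ) ^ 2 := by
    intro c
    rw [← Finset.sum_coe_sort Λ (fun l => ext c l ^ 2)]
    refine Finset.sum_congr rfl fun μ _ => ?_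
    simp [ext, μ.2]
  have hRiesz' : ∀ c : ↥Λ → ℝ, ∑ μ : ↥Λ, (c μ) ^ 2 ≤ C * ‖Tl c‖ ^ 2 := by
    intro c
    have := hRiesz (ext c)
    rw [hTl c, hsq c] at this
    have h2 : (1 / C) * ∑ μ : ↥Λ, (c μ) ^ 2 ≤ ‖Tl c‖ ^ 2 := this
    calc ∑ μ : ↥Λ, (c μ) ^ 2 = C * ((1 / C) * ∑ μ : ↥Λ, (c μ) ^ 2) := by
          field_simp
      _ ≤ C * ‖Tl c‖ ^ 2 := by
          exact mul_le_mul_of_nonneg_left h2 hC.le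
  -- the endomorphism c ↦ (⟨Tl c, κ μ⟩)_μ
  let A : (↥Λ → ℝ) →ₗ[ℝ] (↥Λ → ℝ) :=
    { toFun := fun c μ => (inner ℝ (Tl c) (κ (μ : X)) : ℝ)
      map_add' := by
        intro c d; funext μ; simp [inner_add_left]
      map_smul' := by
        intro r c; funext μ; simp [real_inner_smul_left] }
  have hinj : Function.Injective A := by
    rw [← LinearMap.ker_eq_bot, LinearMap.ker_eq_bot']
    intro c hc
    have hz : ∀ μ : ↥Λ, (inner ℝ (Tl c) (κ (μ : X)) : ℝ) = 0 := by
      intro μ; exact congrFun hc μ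
    have hnorm : ‖Tl c‖ ^ 2 = 0 := by
      have : (inner ℝ (Tl c) (Tl c) : ℝ) = 0 := by
        rw [show (Tl c : H) = ∑ μ : ↥Λ, c μ • κ (μ : X) from rfl]
        rw [inner_sum]
        refine Finset.sum_eq_zero fun μ _ => ?_
        rw [real_inner_smul_right]
        exact mul_eq_zero_of_right _ (hz μ)
      rw [← real_inner_self_eq_norm_sq, this]
    have hle := hRiesz' c
    rw [hnorm, mul_zero] at hle
    have : ∑ μ : ↥Λ, (c μ) ^ 2 = 0 :=
      le_antisymm hle (Finset.sum_nonneg fun μ _ => sq_nonneg _)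
    funext μ
    have := (Finset.sum_eq_zero_iff_of_nonneg (fun μ _ => sq_nonneg (c μ))).mp this
      μ (Finset.mem_univ μ)
    exact pow_eq_zero_iff (n := 2) (by norm_num) |>.mp this
  have hsurj : Function.Surjective A :=
    (LinearMap.injective_iff_surjective).mp hinj
  obtain ⟨c, hc⟩ := hsurj (fun μ : ↥Λ => v (μ : X))
  refine ⟨Tl c, ?_, ?_, ?_⟩
  · rw [show (Tl c : H) = ∑ μ : ↥Λ, c μ • κ (μ : X) from rfl]
    refine Submodule.sum_mem _ fun μ _ => Submodule.smul_mem _ _ ?_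
    exact Submodule.subset_span ⟨(μ : X), μ.2, rfl⟩
  · intro l hl
    have := congrFun hc ⟨l, hl⟩
    have h1 : (inner ℝ (Tl c) (κ l) : ℝ) = v l := this
    rw [← h1, hκ]
    rw [real_inner_smul_right]
    rw [div_eq_inv_mul, mul_comm]
  · have hvals : ∀ μ : ↥Λ, (inner ℝ (Tl c) (κ (μ : X)) : ℝ) = v (μ : X) :=
      fun μ => congrFun hc μ
    have hnorm : ‖Tl c‖ ^ 2 = ∑ μ : ↥Λ, c μ * v (μ : X) := by
      rw [← real_inner_self_eq_norm_sq]
      nth_rewrite 1 [show (Tl c : H) = ∑ μ : ↥Λ, c μ • κ (μ : X) from rfl]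
      rw [sum_inner]
      refine Finset.sum_congr rfl fun μ _ => ?_
      rw [real_inner_smul_left, real_inner_comm, hvals μ]
    have hcs := Finset.sum_mul_sq_le_sq_mul_sq Finset.univ c (fun μ : ↥Λ => v (μ : X))
    have hriesz := hRiesz' c
    have hvv : ∑ μ : ↥Λ, (v (μ : X)) ^ 2 = ∑ l ∈ Λ, (v l) ^ 2 :=
      Finset.sum_coe_sort Λ (fun l => v l ^ 2)
    have hv0 : (0:ℝ) ≤ ∑ l ∈ Λ, (v l) ^ 2 := Finset.sum_nonneg fun _ _ => sq_nonneg _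
    have hf0 : (0:ℝ) ≤ ‖Tl c‖ ^ 2 := sq_nonneg _
    -- (‖f‖²)² ≤ (∑c²)(∑v²) ≤ C‖f‖² ∑v²
    rw [hvv] at hcs
    rw [← hnorm] at hcs
    rcases eq_or_lt_of_le hf0 with h0 | h0
    · rw [← h0]; positivity
    · have key : ‖Tl c‖ ^ 2 * ‖Tl c‖ ^ 2 ≤ ‖Tl c‖ ^ 2 * (C * ∑ l ∈ Λ, (v l) ^ 2) := by
        nlinarith [mul_le_mul_of_nonneg_right hriesz hv0]
      exact le_of_mul_le_mul_left key h0
  done
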